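/- Let Σ_P = diag(σ₁I₂, …, σₙI₂) with σⱼ > 0 and Q symmetric satisfying Jₙ Σ_P⁻¹ Q Σ_P Jₙ = -Q. Then for any j ≠ k with σⱼ ≠ σₖ, the 2×2 block of Q in rows {2j-1, 2j} and columns {2k-1, 2k} is the zero matrix. -/

import Mathlib

open Matrix Kronecker Polynomial

/-- The 2×2 symplectic form matrix [[0,1],[-1,0]]. -/
noncomputable def Jb : Matrix (Fin 2) (Fin 2) ℝ := !![0, 1; -1, 0]

/-- Jₙ = Iₙ ⊗ J₁, indexed by pairs (block index, position within block). -/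
noncomputable def Jmat (n : ℕ) : Matrix (Fin n × Fin 2) (Fin n × Fin 2) ℝ :=
  (1 : Matrix (Fin n) (Fin n) ℝ) ⊗ₖ Jb

/-- Block-scalar diagonal matrix diag(σ₁I₂, …, σₙI₂). -/
noncomputable def SigmaD {n : ℕ} (σ : Fin n → ℝ) : Matrix (Fin n × Fin 2) (Fin n × Fin 2) ℝ :=
  Matrix.of fun p q => if p = q then σ p.1 else 0

theorem stmt15 (n : ℕ) (σ : Fin n → ℝ) (hσ : ∀ j, 0 < σ j)
    (Q : Matrix (Fin n × Fin 2) (Fin n × Fin 2) ℝ) (hQsymm : Q.IsSymm)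
    (hEq : Jmat n * (SigmaD σ)⁻¹ * Q * SigmaD σ * Jmat n = -Q) :
    ∀ j k : Fin n, j ≠ k → σ j ≠ σ k → ∀ a b : Fin 2, Q (j, a) (k, b) = 0 := by
  intro j k hjk hσjk
  have hD : SigmaD σ = Matrix.diagonal (fun p : Fin n × Fin 2 => σ p.1) := by
    ext p q
    simp [SigmaD, Matrix.diagonal]
  have hDinv : (SigmaD σ)⁻¹ = Matrix.diagonal (fun p : Fin n × Fin 2 => (σ p.1)⁻¹) := by
    apply Matrix.inv_eq_right_inv
    rw [hD, Matrix.diagonal_mul_diagonal]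
    ext p q
    by_cases hpq : p = q
    · subst hpq
      simp [Matrix.diagonal, Matrix.one_apply, mul_inv_cancel₀ (ne_of_gt (hσ p.1))]
    · simp [Matrix.diagonal, Matrix.one_apply, hpq]
  rw [hDinv, hD] at hEq
  have h : ∀ a b : Fin 2,
      (Jmat n * Matrix.diagonal (fun p : Fin n × Fin 2 => (σ p.1)⁻¹) * Q *
        Matrix.diagonal (fun p : Fin n × Fin 2 => σ p.1) * Jmat n) (j, a) (k, b)
      = -Q (j, a) (k, b) := by
    intro a b
    have := congrFun (congrFun hEq (j, a)) (k, b)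
    simpa using this
  have h' : ∀ a b : Fin 2,
      (1 * Jb a 0 * (σ j)⁻¹ * Q (j, 0) (k, 0) + 1 * Jb a 1 * (σ j)⁻¹ * Q (j, 1) (k, 0)) * σ k *
            (1 * Jb 0 b) +
          (1 * Jb a 0 * (σ j)⁻¹ * Q (j, 0) (k, 1) + 1 * Jb a 1 * (σ j)⁻¹ * Q (j, 1) (k, 1)) * σ k *
            (1 * Jb 1 b) = -Q (j, a) (k, b) := by
    intro a b
    have := h a b
    simp only [Jmat, Matrix.mul_apply, Fintype.sum_prod_type, kroneckerMap_apply,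
      Matrix.one_apply, Matrix.diagonal_apply, Prod.mk.injEq, ite_mul, mul_ite, zero_mul,
      mul_zero, ite_and, Finset.sum_ite_eq, Finset.sum_ite_eq', Finset.mem_univ, if_true,
      Finset.sum_add_distrib, Fin.sum_univ_two] at this
    exact this
  have hs := (hσ j).ne'
  have ht := (hσ k).ne'
  have e00 := h' 0 0
  have e01 := h' 0 1
  have e10 := h' 1 0
  have e11 := h' 1 1
  simp only [Jb, Matrix.cons_val', Matrix.cons_val_zero, Matrix.cons_val_one, Matrix.head_cons,
    Matrix.head_fin_const, Matrix.of_apply, Matrix.empty_val', Matrix.cons_val_fin_one,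
    one_mul, mul_one, mul_zero, zero_mul, add_zero, zero_add, mul_neg, neg_mul] at e00 e01 e10 e11
  have hne : σ j ^ 2 - σ k ^ 2 ≠ 0 := by
    intro hzero
    apply hσjk
    nlinarith [hσ j, hσ k]
  field_simp at e00 e01 e10 e11
  have q00 : Q (j, 0) (k, 0) = 0 := by
    have : (σ j ^ 2 - σ k ^ 2) * Q (j, 0) (k, 0) = 0 := by linear_combination σ j * e00 + σ k * e11
    exact (mul_eq_zero.mp this).resolve_left hne
  have q11 : Q (j, 1) (k, 1) = 0 := by
    have : (σ j ^ 2 - σ k ^ 2) * Q (j, 1) (k, 1) = 0 := by linear_combination σ k * e00 + σ j * e11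
    exact (mul_eq_zero.mp this).resolve_left hne
  have q01 : Q (j, 0) (k, 1) = 0 := by
    have : (σ j ^ 2 - σ k ^ 2) * Q (j, 0) (k, 1) = 0 := by linear_combination σ j * e01 - σ k * e10
    exact (mul_eq_zero.mp this).resolve_left hne
  have q10 : Q (j, 1) (k, 0) = 0 := by
    have : (σ j ^ 2 - σ k ^ 2) * Q (j, 1) (k, 0) = 0 := by linear_combination (-σ k) * e01 + σ j * e10
    exact (mul_eq_zero.mp this).resolve_left hne
  intro a b
  fin_cases a <;> fin_cases b <;> assumption
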